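/- Let n ≥ m be positive integers and k = n - m + 1. Let f : ℝⁿ → ℝᵐ be a function and N a subset of {x : limsup_{h→0} |f(x+h)-f(x)|/|h|^k < ∞} with Lebesgue measure zero in ℝⁿ. Then f(N) has Lebesgue measure zero in ℝᵐ. -/

import Mathlib

open MeasureTheory Asymptotics Filter
open scoped NNReal ENNReal

theorem pointwise_holder_null_image
    (n m : ℕ) (hm : 0 < m) (hnm : m ≤ n) (k : ℕ) (hk : k = n - m + 1)
    (f : (Fin n → ℝ) → (Fin m → ℝ)) (N : Set (Fin n → ℝ))
    (hN : N ⊆ {x | (fun h => f (x + h) - f x) =O[nhds 0] fun h => ‖h‖ ^ k})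
    (hNnull : volume N = 0) :
    volume (f '' N) = 0 := by
  -- k * m ≥ n
  have hkm : (n : ℝ) ≤ (k : ℝ) * m := by
    have : n ≤ k * m := by
      subst hk
      calc n = (n - m) + m := (Nat.sub_add_cancel hnm).symm
        _ ≤ (n - m) * m + m := Nat.add_le_add_right (Nat.le_mul_of_pos_right _ hm) m
        _ = (n - m + 1) * m := by ring
    exact_mod_cast this
  have hk0 : (0 : ℝ≥0) < (k : ℝ≥0) := by
    have : 0 < k := by omega
    exact_mod_cast this
  -- the pointwise sets
  set S : ℕ → Set (Fin n → ℝ) := fun i =>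
    {x ∈ N | ∀ y, dist y x ≤ 1 / (i + 1) → ‖f y - f x‖ ≤ (i + 1) * ‖y - x‖ ^ k} with hS
  have hNsub : N ⊆ ⋃ i, S i := by
    intro x hx
    obtain ⟨C, hC⟩ := isBigO_iff.mp (hN hx)
    rw [Metric.eventually_nhds_iff] at hC
    obtain ⟨δ, hδ0, hδ⟩ := hC
    obtain ⟨i, hi⟩ := exists_nat_ge (max C (2 / δ))
    refine Set.mem_iUnion.mpr ⟨i, hx, fun y hy => ?_⟩
    have hiC : C ≤ (i : ℝ) + 1 := le_trans (le_max_left _ _) (by linarith)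
    have hiδ : 1 / ((i : ℝ) + 1) < δ := by
      have h2 : 2 / δ ≤ (i : ℝ) + 1 := le_trans (le_max_right _ _) (by linarith)
      have hi1 : (0 : ℝ) < (i : ℝ) + 1 := by positivity
      rw [div_lt_iff₀ hi1]
      rw [div_le_iff₀ hδ0] at h2
      rw [mul_comm] at h2
      linarith
    have hyx : dist (y - x) 0 < δ := by
      rw [dist_zero_right]
      calc ‖y - x‖ = dist y x := (dist_eq_norm y x).symm
        _ ≤ 1 / (i + 1) := hy
        _ < δ := hiδ
    have h3 := hδ hyx
    simp only [add_sub_cancel] at h3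
    calc ‖f y - f x‖ ≤ C * ‖‖y - x‖ ^ k‖ := h3
      _ ≤ ((i : ℝ) + 1) * ‖y - x‖ ^ k := by
          rw [Real.norm_of_nonneg (by positivity)]
          exact mul_le_mul_of_nonneg_right hiC (by positivity)
  -- countable dense set
  obtain ⟨D, hDc, hDd⟩ := TopologicalSpace.exists_countable_dense (Fin n → ℝ)
  -- the pieces
  set T : ℕ → (Fin n → ℝ) → Set (Fin n → ℝ) := fun i q =>
    S i ∩ Metric.closedBall q (1 / (2 * (i + 1))) with hT
  have hcover : N ⊆ ⋃ i, ⋃ q ∈ D, T i q := by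
    intro x hx
    obtain ⟨i, hi⟩ := Set.mem_iUnion.mp (hNsub hx)
    have hr : (0 : ℝ) < 1 / (2 * (i + 1)) := by positivity
    obtain ⟨q, hqball, hqD⟩ := Metric.dense_iff.mp hDd x _ hr
    refine Set.mem_iUnion.mpr ⟨i, Set.mem_iUnion₂.mpr ⟨q, hqD, hi, ?_⟩⟩
    rw [Metric.mem_ball] at hqball
    exact Metric.mem_closedBall.mpr (by rw [dist_comm]; exact le_of_lt hqball)
  -- each piece is Hölder
  have hHolder : ∀ (i : ℕ) (q : Fin n → ℝ), HolderOnWith ((i : ℝ≥0) + 1) (k : ℝ≥0) f (T i q) := by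
    intro i q x hx y hy
    have hxS : x ∈ S i := hx.1
    have hdxy : dist y x ≤ 1 / (i + 1) := by
      have h1 := Metric.mem_closedBall.mp hx.2
      have h2 := Metric.mem_closedBall.mp hy.2
      calc dist y x ≤ dist y q + dist q x := dist_triangle _ _ _
        _ ≤ 1 / (2 * (i + 1)) + 1 / (2 * (i + 1)) := by
            rw [dist_comm q x]; exact add_le_add h2 h1
        _ = 1 / (i + 1) := by
            rw [← add_div]
            rw [show (1:ℝ) + 1 = 2 from by norm_num]
            rw [show (2:ℝ) * ((i:ℝ) + 1) = ((i:ℝ)+1) * 2 from by ring]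
            rw [div_mul_eq_div_div_swap]
            norm_num
    have hb : ‖f y - f x‖ ≤ ((i : ℝ) + 1) * ‖y - x‖ ^ k := hxS.2 y hdxy
    have hbd : dist (f x) (f y) ≤ ((i : ℝ) + 1) * dist x y ^ k := by
      rw [dist_eq_norm, dist_eq_norm, norm_sub_rev, norm_sub_rev x y]
      exact hb
    rw [edist_dist, edist_dist]
    calc ENNReal.ofReal (dist (f x) (f y))
        ≤ ENNReal.ofReal (((i : ℝ) + 1) * dist x y ^ k) := ENNReal.ofReal_le_ofReal hbd
      _ = ENNReal.ofReal ((i : ℝ) + 1) * ENNReal.ofReal (dist x y ^ k) := by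
          rw [ENNReal.ofReal_mul (by positivity)]
      _ = (((i : ℝ≥0) + 1 : ℝ≥0) : ℝ≥0∞) * ENNReal.ofReal (dist x y) ^ ((k : ℝ≥0) : ℝ) := by
          rw [show ((k : ℝ≥0) : ℝ) = ((k : ℕ) : ℝ) from by norm_cast, ENNReal.rpow_natCast,
            ← ENNReal.ofReal_pow dist_nonneg, ← ENNReal.ofReal_coe_nnreal]
          norm_num
  -- each image piece is null
  have hvolm : (μH[(m : ℝ)] : Measure (Fin m → ℝ)) = volume := by
    have h := MeasureTheory.hausdorffMeasure_pi_real (ι := Fin m)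
    rwa [Fintype.card_fin] at h
  have hvoln : (μH[(n : ℝ)] : Measure (Fin n → ℝ)) = volume := by
    have h := MeasureTheory.hausdorffMeasure_pi_real (ι := Fin n)
    rwa [Fintype.card_fin] at h
  have hμ : ∀ i q, volume (f '' T i q) = 0 := by
    intro i q
    have h1 := (hHolder i q).hausdorffMeasure_image_le hk0 (d := (m : ℝ)) (by positivity)
    have h2 : μH[((k : ℝ≥0) : ℝ) * (m : ℝ)] (T i q) = 0 := by
      have hle : μH[((k : ℝ≥0) : ℝ) * (m : ℝ)] (T i q) ≤ μH[(n : ℝ)] (T i q) :=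
        MeasureTheory.Measure.hausdorffMeasure_mono (by push_cast; exact hkm) _
      have hn0 : μH[(n : ℝ)] (T i q) = 0 := by
        rw [hvoln]
        exact measure_mono_null (fun x hx => hx.1.1) hNnull
      exact le_antisymm (hle.trans hn0.le) zero_le
    rw [h2, mul_zero, hvolm] at h1
    exact le_antisymm h1 zero_le
  -- conclude
  have himg : f '' N ⊆ ⋃ i, ⋃ q ∈ D, f '' T i q := by
    intro y hy
    obtain ⟨x, hx, rfl⟩ := hy
    obtain ⟨i, hi⟩ := Set.mem_iUnion.mp (hcover hx)
    obtain ⟨q, hqD, hq⟩ := Set.mem_iUnion₂.mp hi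
    exact Set.mem_iUnion.mpr ⟨i, Set.mem_iUnion₂.mpr ⟨q, hqD, ⟨x, hq, rfl⟩⟩⟩
  refine measure_mono_null himg ?_
  refine measure_iUnion_null fun i => ?_
  exact (measure_biUnion_null_iff hDc).mpr fun q _ => hμ i q
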